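/- Let each agent v's finite-horizon problem include the linear terminal penalty V_f^v(x_N) = (λ_s^v)ᵀ x_N, and suppose (x_s, (u_s^v), (λ_s^v)) solves the steady-state KKT system (with all inequality multipliers zero): x_s = f(x_s, u_s), λ_s^v = ∇_x ℓ^v(x_s,u_s) + ∇_x f(x_s,u_s)ᵀ λ_s^v, 0 = ∇_{u^v} ℓ^v(x_s,u_s) + ∇_{u^v} f(x_s,u_s)ᵀ λ_s^v. Then for every horizon N ≥ 1 and initial condition x_0 = x_s, the constant trajectory x_k ≡ x_s, u_k^v ≡ u_s^v with constant adjoints λ_k^v ≡ λ_s^v satisfies all the finite-horizon KKT conditions, including the modified boundary condition λ_N^v = ∇V_f^v(x_N) = λ_s^v. -/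

import Mathlib

open scoped RealInnerProductSpace

lemma grad_inner_aux {n : ℕ} (c x : EuclideanSpace ℝ (Fin n)) :
    gradient (fun y => ⟪c, y⟫) x = c := by
  have h := ((InnerProductSpace.toDual ℝ (EuclideanSpace ℝ (Fin n))) c).hasFDerivAt (x := x)
  have h2 := h.hasGradientAt
  simp only [LinearIsometryEquiv.symm_apply_apply] at h2
  convert h2.gradient using 2
  ext y
  simp [InnerProductSpace.toDual_apply_apply]

/-- Corollary 14 / Proposition 13(i): with linear terminal penalties
`V_f^v(x) = ⟪λ_s^v, x⟫` and a steady-state KKT point (no active inequality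
constraints), the constant steady-state trajectory with constant adjoints
satisfies all finite-horizon KKT conditions, including the terminal
transversality condition. -/
theorem stmt_19 {n m : ℕ} (V : Type*) [Fintype V] [DecidableEq V]
    (f : EuclideanSpace ℝ (Fin n) → (V → EuclideanSpace ℝ (Fin m)) →
      EuclideanSpace ℝ (Fin n))
    (ℓv : V → EuclideanSpace ℝ (Fin n) → (V → EuclideanSpace ℝ (Fin m)) → ℝ)
    (xst : EuclideanSpace ℝ (Fin n)) (ust : V → EuclideanSpace ℝ (Fin m))
    (lam : V → EuclideanSpace ℝ (Fin n))
    (hss : f xst ust = xst)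
    (hlamst : ∀ v : V,
      lam v = gradient (fun x => ℓv v x ust) xst +
        (ContinuousLinearMap.adjoint (fderiv ℝ (fun x => f x ust) xst)) (lam v))
    (hust : ∀ v : V,
      (0 : EuclideanSpace ℝ (Fin m)) =
        gradient (fun uv => ℓv v xst (Function.update ust v uv)) (ust v) +
        (ContinuousLinearMap.adjoint
          (fderiv ℝ (fun uv => f xst (Function.update ust v uv)) (ust v)))
          (lam v))
    (N : ℕ) (hN : 1 ≤ N)
    (xseq : ℕ → EuclideanSpace ℝ (Fin n))
    (useq : V → ℕ → EuclideanSpace ℝ (Fin m))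
    (lamseq : V → ℕ → EuclideanSpace ℝ (Fin n))
    (hx : ∀ k, xseq k = xst) (hu : ∀ v k, useq v k = ust v)
    (hlam : ∀ v k, lamseq v k = lam v) :
    (xseq 0 = xst) ∧
    (∀ k < N, xseq (k + 1) = f (xseq k) (fun v => useq v k)) ∧
    (∀ k < N, ∀ v : V,
      lamseq v k = gradient (fun x => ℓv v x ust) (xseq k) +
        (ContinuousLinearMap.adjoint (fderiv ℝ (fun x => f x ust) (xseq k)))
          (lamseq v (k + 1))) ∧
    (∀ k < N, ∀ v : V,
      (0 : EuclideanSpace ℝ (Fin m)) =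
        gradient (fun uv => ℓv v (xseq k) (Function.update ust v uv))
          (useq v k) +
        (ContinuousLinearMap.adjoint
          (fderiv ℝ (fun uv => f (xseq k) (Function.update ust v uv))
            (useq v k))) (lamseq v (k + 1))) ∧
    (∀ v : V,
      lamseq v N = gradient (fun x => ⟪lam v, x⟫) (xseq N)) := by
  refine ⟨hx 0, ?_, ?_, ?_, ?_⟩
  · intro k _
    have : (fun v => useq v k) = ust := funext fun v => hu v k
    rw [hx (k+1), hx k, this, hss]
  · intro k _ v
    rw [hx k, hlam v k, hlam v (k+1)]
    exact hlamst v
  · intro k _ v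
    rw [hx k, hu v k, hlam v (k+1)]
    exact hust v
  · intro v
    rw [hlam v N, grad_inner_aux]
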